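/- Let A be a finite set and let X ⊆ A^ℤ be a strongly irreducible subshift. Then the automorphism group Aut(X), consisting of all bijective continuous shift-equivariant maps X → X under composition, is a residually finite group. -/

import Mathlib

/-- The shift action of `ℤ` on configurations `x : ℤ → A`: `(n • x)(m) = x(m - n)`. -/
def shiftZ {A : Type*} (n : ℤ) (x : ℤ → A) : ℤ → A :=
  fun m => x (m - n)

/-- A subshift is a closed, shift-invariant subset of `A^ℤ` (with the prodiscrete
topology). -/
def IsSubshiftZ {A : Type*} [TopologicalSpace A] (X : Set (ℤ → A)) : Prop :=
  IsClosed X ∧ ∀ (n : ℤ) (x : ℤ → A), x ∈ X → shiftZ n x ∈ X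

/-- A configuration is periodic if its orbit under the shift action is finite. -/
def IsPeriodicZ {A : Type*} (x : ℤ → A) : Prop :=
  (Set.range fun n : ℤ => shiftZ n x).Finite

/-- A subshift `X ⊆ A^ℤ` is strongly irreducible if there is a finite `Δ ⊆ ℤ` such
that whenever `Ω₁, Ω₂` are finite subsets of `ℤ` with `(Ω₁ - Δ) ∩ Ω₂ = ∅`, any two
configurations of `X` can be glued along `Ω₁` and `Ω₂` inside `X`. -/
def IsStronglyIrreducibleZ {A : Type*} (X : Set (ℤ → A)) : Prop :=
  ∃ Δ : Finset ℤ, ∀ Ω₁ Ω₂ : Finset ℤ,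
    (∀ a ∈ Ω₁, ∀ d ∈ Δ, a - d ∉ Ω₂) →
    ∀ x₁ ∈ X, ∀ x₂ ∈ X, ∃ x ∈ X,
      (∀ i ∈ Ω₁, x i = x₁ i) ∧ (∀ i ∈ Ω₂, x i = x₂ i)

/-- The word `w` appears as a subword of the configuration `x : ℤ → A`. -/
def AppearsIn {A : Type*} (w : List A) (x : ℤ → A) : Prop :=
  ∃ i : ℤ, ∀ k : Fin w.length, x (i + (k.1 : ℤ)) = w.get k

/-- The language of `X ⊆ A^ℤ`: all finite words appearing in configurations of `X`. -/
def lang {A : Type*} (X : Set (ℤ → A)) : Set (List A) :=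
  {w : List A | ∃ x ∈ X, AppearsIn w x}

/-- A group is residually finite if the intersection of its finite-index subgroups is
trivial, i.e. every nontrivial element avoids some finite-index subgroup. -/
def ResiduallyFinite (H : Type*) [Group H] : Prop :=
  ∀ h : H, h ≠ 1 → ∃ K : Subgroup H, K.FiniteIndex ∧ h ∉ K

/-- An automorphism of a subshift `X ⊆ A^ℤ`: a bijective self-map of `X` that is
continuous (in the prodiscrete topology) with continuous inverse and commutes
(together with its inverse) with the shift action of `ℤ`.
(For a subshift, a bijective continuous shift-equivariant map automatically has
continuous equivariant inverse, by compactness and shift-invariance.) -/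
structure ShiftAutZ {A : Type*} [TopologicalSpace A] (X : Set (ℤ → A)) where
  toEquiv : {x : ℤ → A // x ∈ X} ≃ {x : ℤ → A // x ∈ X}
  continuous_toFun : Continuous fun x : {x : ℤ → A // x ∈ X} => (toEquiv x : ℤ → A)
  continuous_invFun : Continuous fun x : {x : ℤ → A // x ∈ X} => (toEquiv.symm x : ℤ → A)
  equivariant : ∀ (n : ℤ) (x y : {x : ℤ → A // x ∈ X}),
    (y : ℤ → A) = shiftZ n (x : ℤ → A) → (toEquiv y : ℤ → A) = shiftZ n (toEquiv x : ℤ → A)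
  equivariant_symm : ∀ (n : ℤ) (x y : {x : ℤ → A // x ∈ X}),
    (y : ℤ → A) = shiftZ n (x : ℤ → A) →
      (toEquiv.symm y : ℤ → A) = shiftZ n (toEquiv.symm x : ℤ → A)

theorem ShiftAutZ.ext' {A : Type*} [TopologicalSpace A] {X : Set (ℤ → A)}
    {f g : ShiftAutZ X} (h : f.toEquiv = g.toEquiv) : f = g := by
  cases f; cases g; cases h; rfl

/-- The automorphism group `Aut(X)` of a subshift over `ℤ`, under composition. -/
instance ShiftAutZ.instGroup {A : Type*} [TopologicalSpace A]
    (X : Set (ℤ → A)) : Group (ShiftAutZ X) where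
  mul f₁ f₂ :=
    { toEquiv := f₂.toEquiv.trans f₁.toEquiv
      continuous_toFun := by
        have h2 : Continuous fun x : {x : ℤ → A // x ∈ X} => f₂.toEquiv x :=
          f₂.continuous_toFun.subtype_mk fun x => (f₂.toEquiv x).2
        exact f₁.continuous_toFun.comp h2
      continuous_invFun := by
        have h1 : Continuous fun x : {x : ℤ → A // x ∈ X} => f₁.toEquiv.symm x :=
          f₁.continuous_invFun.subtype_mk fun x => (f₁.toEquiv.symm x).2
        exact f₂.continuous_invFun.comp h1
      equivariant := fun n x y h => f₁.equivariant n _ _ (f₂.equivariant n x y h)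
      equivariant_symm := fun n x y h =>
        f₂.equivariant_symm n _ _ (f₁.equivariant_symm n x y h) }
  one :=
    { toEquiv := Equiv.refl _
      continuous_toFun := continuous_subtype_val
      continuous_invFun := continuous_subtype_val
      equivariant := fun _ _ _ h => h
      equivariant_symm := fun _ _ _ h => h }
  inv f :=
    { toEquiv := f.toEquiv.symm
      continuous_toFun := f.continuous_invFun
      continuous_invFun := f.continuous_toFun
      equivariant := f.equivariant_symm
      equivariant_symm := f.equivariant }
  mul_assoc a b c := ShiftAutZ.ext' (Equiv.ext fun _ => rfl)
  one_mul a := ShiftAutZ.ext' (Equiv.ext fun _ => rfl)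
  mul_one a := ShiftAutZ.ext' (Equiv.ext fun _ => rfl)
  inv_mul_cancel a := ShiftAutZ.ext' (Equiv.ext fun x => a.toEquiv.symm_apply_apply x)



set_option linter.unusedSectionVars false

namespace SIRF

lemma shiftZ_apply {A : Type*} (n : ℤ) (x : ℤ → A) (m : ℤ) : shiftZ n x m = x (m - n) := rfl

lemma shiftZ_shiftZ {A : Type*} (a b : ℤ) (x : ℤ → A) :
    shiftZ a (shiftZ b x) = shiftZ (a + b) x := by
  funext m; simp [shiftZ, sub_sub]

section Compactness

variable {B : Type*} [TopologicalSpace B] [DiscreteTopology B] [Finite B]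

lemma closed_agree (Q : ℤ → B → Prop) (F : Finset ℤ) :
    IsClosed {z : ℤ → B | ∀ i ∈ F, Q i (z i)} := by
  have h : {z : ℤ → B | ∀ i ∈ F, Q i (z i)}
      = ⋂ i ∈ F, (fun z : ℤ → B => z i) ⁻¹' {c | Q i c} := by
    ext z; simp
  rw [h]
  exact isClosed_biInter fun i _ => (isClosed_discrete _).preimage (continuous_apply i)

lemma inter_nonempty {Z : Set (ℤ → B)} (hcl : IsClosed Z)
    (Q : ℤ → B → Prop)
    (hne : ∀ F : Finset ℤ, ∃ z ∈ Z, ∀ i ∈ F, Q i (z i)) :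
    ∃ z ∈ Z, ∀ i, Q i (z i) := by
  set D : Finset ℤ → Set (ℤ → B) := fun F => Z ∩ {z | ∀ i ∈ F, Q i (z i)} with hD
  have hclosed : ∀ F, IsClosed (D F) := fun F => hcl.inter (closed_agree Q F)
  have hcompact : ∀ F, IsCompact (D F) := fun F => (hclosed F).isCompact
  have hdir : Directed (· ⊇ ·) D := by
    intro F G
    refine ⟨F ∪ G, fun z hz => ⟨hz.1, fun i hi => hz.2 i (Finset.mem_union_left _ hi)⟩,
           fun z hz => ⟨hz.1, fun i hi => hz.2 i (Finset.mem_union_right _ hi)⟩⟩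
  obtain ⟨z, hz⟩ := IsCompact.nonempty_iInter_of_directed_nonempty_isCompact_isClosed
    D hdir (fun F => by obtain ⟨z, hz, hq⟩ := hne F; exact ⟨z, hz, hq⟩) hcompact hclosed
  simp only [Set.mem_iInter] at hz
  exact ⟨z, (hz ∅).1, fun i => (hz {i}).2 i (Finset.mem_singleton_self i)⟩

end Compactness

/-! ### Core: subshifts with distance-2 gluing have periodic points -/

section Core

variable {B : Type*} [TopologicalSpace B] [DiscreteTopology B] [Finite B]

/-- Gluing along any two finite sets at distance ≥ 2. -/
def Glue2 (Z : Set (ℤ → B)) : Prop :=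
  ∀ (Ω₁ Ω₂ : Finset ℤ), (∀ a ∈ Ω₁, ∀ c ∈ Ω₂, 2 ≤ |a - c|) →
    ∀ z₁ ∈ Z, ∀ z₂ ∈ Z, ∃ z ∈ Z,
      (∀ i ∈ Ω₁, z i = z₁ i) ∧ (∀ i ∈ Ω₂, z i = z₂ i)

/-- Letters occurring in `Z`. -/
def occ (Z : Set (ℤ → B)) : Set B := {b | ∃ z ∈ Z, ∃ i : ℤ, z i = b}

/-- Elements of `Z` with letter `b` at every even position. -/
def Zb (b : B) (Z : Set (ℤ → B)) : Set (ℤ → B) := {z ∈ Z | ∀ j : ℤ, z (2 * j) = b}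

/-- The odd-position recoding of `Zb b Z`. -/
def derived (b : B) (Z : Set (ℤ → B)) : Set (ℤ → B) :=
  (fun ζ => fun j : ℤ => ζ (2 * j + 1)) '' Zb b Z

lemma occ_nonempty {Z : Set (ℤ → B)} (h : Z.Nonempty) : (occ Z).Nonempty := by
  obtain ⟨z, hz⟩ := h; exact ⟨z 0, z, hz, 0, rfl⟩

lemma even_abs_two_le {a c : ℤ} (ha : Even a) (hc : Even c) (h : a ≠ c) : 2 ≤ |a - c| := by
  obtain ⟨p, hp⟩ := ha; obtain ⟨q, hq⟩ := hc
  rcases abs_cases (a - c) with ⟨h1, _⟩ | ⟨h1, _⟩ <;> omega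

lemma abs_two_le_iff (x : ℤ) : 2 ≤ |x| ↔ 2 ≤ x ∨ x ≤ -2 := by
  rcases abs_cases x with ⟨h, _⟩ | ⟨h, _⟩ <;> omega

lemma abs_le_iff' (m x : ℤ) : m ≤ |x| ↔ m ≤ x ∨ x ≤ -m := by
  rcases abs_cases x with ⟨h, _⟩ | ⟨h, _⟩ <;> omega

lemma Zb_nonempty {Z : Set (ℤ → B)} (hZ : IsSubshiftZ Z) (hg : Glue2 Z) {b : B}
    (hb : b ∈ occ Z) : (Zb b Z).Nonempty := by
  classical
  obtain ⟨z₀, hz₀, i₀, hi₀⟩ := hb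
  -- configurations with b at a prescribed position
  have hzb : ∀ j : ℤ, ∃ z ∈ Z, z (2 * j) = b := by
    intro j
    refine ⟨shiftZ (2 * j - i₀) z₀, hZ.2 _ _ hz₀, ?_⟩
    simp [shiftZ_apply, hi₀]
  have stage : ∀ F : Finset ℤ, ∃ z ∈ Z, ∀ i ∈ F, ∀ j : ℤ, i = 2 * j → z i = b := by
    intro F
    induction F using Finset.induction_on with
    | empty => exact ⟨z₀, hz₀, by simp⟩
    | @insert i₁ F hi₁F ih =>
      obtain ⟨z, hzZ, hz⟩ := ih
      by_cases hev : Even i₁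
      · obtain ⟨j₁, hj₁⟩ := hev
        obtain ⟨z', hz'Z, hz'⟩ := hzb j₁
        have hd : ∀ a ∈ F.filter (fun i => Even i), ∀ c ∈ ({i₁} : Finset ℤ), 2 ≤ |a - c| := by
          intro a ha c hc
          simp only [Finset.mem_filter] at ha
          simp only [Finset.mem_singleton] at hc
          subst hc
          exact even_abs_two_le ha.2 ⟨j₁, hj₁⟩ (fun h => hi₁F (h ▸ ha.1))
        obtain ⟨w, hwZ, hw1, hw2⟩ := hg _ _ hd z hzZ z' hz'Z
        refine ⟨w, hwZ, ?_⟩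
        intro i hi j hij
        rcases Finset.mem_insert.mp hi with rfl | hiF
        · have hjj : j = j₁ := by omega
          rw [hw2 i (Finset.mem_singleton_self i), hij, hjj]
          exact hz'
        · rw [hw1 i (Finset.mem_filter.mpr ⟨hiF, ⟨j, by omega⟩⟩)]
          exact hz i hiF j hij
      · refine ⟨z, hzZ, ?_⟩
        intro i hi j hij
        rcases Finset.mem_insert.mp hi with rfl | hiF
        · exact absurd ⟨j, by omega⟩ hev
        · exact hz i hiF j hij
  obtain ⟨z, hzZ, hz⟩ := inter_nonempty hZ.1 (fun i c => ∀ j : ℤ, i = 2 * j → c = b) stage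
  exact ⟨z, hzZ, fun j => hz (2 * j) j rfl⟩

lemma derived_nonempty {Z : Set (ℤ → B)} (hZ : IsSubshiftZ Z) (hg : Glue2 Z) {b : B}
    (hb : b ∈ occ Z) : (derived b Z).Nonempty :=
  (Zb_nonempty hZ hg hb).image _

lemma derived_subshift {Z : Set (ℤ → B)} (hZ : IsSubshiftZ Z) (b : B) :
    IsSubshiftZ (derived b Z) := by
  constructor
  · -- closed: continuous image of a compact set
    have hZbc : IsClosed (Zb b Z) := by
      have h : Zb b Z = Z ∩ ⋂ j : ℤ, (fun z : ℤ → B => z (2 * j)) ⁻¹' {b} := by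
        ext z; simp [Zb, Set.mem_iInter]
      rw [h]
      exact hZ.1.inter (isClosed_iInter fun j =>
        (isClosed_discrete _).preimage (continuous_apply _))
    have hcont : Continuous (fun ζ : ℤ → B => fun j : ℤ => ζ (2 * j + 1)) :=
      continuous_pi fun j => continuous_apply _
    exact (hZbc.isCompact.image hcont).isClosed
  · rintro n η ⟨ζ, hζ, rfl⟩
    refine ⟨shiftZ (2 * n) ζ, ⟨hZ.2 _ _ hζ.1, fun j => ?_⟩, ?_⟩
    · have := hζ.2 (j - n)
      simp only [shiftZ_apply]
      rw [show 2 * j - 2 * n = 2 * (j - n) by ring]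
      exact this
    · funext j
      simp only [shiftZ_apply]
      rw [show 2 * j + 1 - 2 * n = 2 * (j - n) + 1 by ring]

lemma occ_derived_subset {Z : Set (ℤ → B)} (b : B) : occ (derived b Z) ⊆ occ Z := by
  rintro c ⟨η, ⟨ζ, hζ, rfl⟩, i, hi⟩
  exact ⟨ζ, hζ.1, 2 * i + 1, hi⟩

lemma derived_glue2 {Z : Set (ℤ → B)} (hZ : IsSubshiftZ Z) (hg : Glue2 Z) (b : B) :
    Glue2 (derived b Z) := by
  classical
  rintro Ω₁ Ω₂ hdist η₁ ⟨ζ₁, hζ₁, rfl⟩ η₂ ⟨ζ₂, hζ₂, rfl⟩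
  have hΩ : ∀ j ∈ Ω₁, ∀ k ∈ Ω₂, 2 ≤ j - k ∨ j - k ≤ -2 := by
    intro j hj k hk; exact (abs_two_le_iff _).mp (hdist j hj k hk)
  set Q : ℤ → B → Prop := fun i c =>
    (Even i → c = b) ∧ (∀ j ∈ Ω₁, i = 2 * j + 1 → c = ζ₁ i) ∧
      (∀ k ∈ Ω₂, i = 2 * k + 1 → c = ζ₂ i) with hQ
  have stage : ∀ F : Finset ℤ, ∃ z ∈ Z, ∀ i ∈ F, Q i (z i) := by
    intro F
    set N₂ : Finset ℤ := Ω₂.image (fun k => 2 * k) ∪ Ω₂.image (fun k => 2 * k + 2) with hN₂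
    set E : Finset ℤ := F.filter (fun i => Even i) with hE
    set Ξ₁ : Finset ℤ := Ω₁.image (fun j => 2 * j + 1) ∪ (E \ N₂) with hΞ₁
    set Ξ₂ : Finset ℤ := Ω₂.image (fun k => 2 * k + 1) ∪ (E ∩ N₂) with hΞ₂
    have memN₂ : ∀ c : ℤ, c ∈ N₂ ↔ ∃ k ∈ Ω₂, c = 2 * k ∨ c = 2 * k + 2 := by
      intro c
      simp only [hN₂, Finset.mem_union, Finset.mem_image]
      constructor
      · rintro (⟨k, hk, rfl⟩ | ⟨k, hk, rfl⟩)
        · exact ⟨k, hk, Or.inl rfl⟩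
        · exact ⟨k, hk, Or.inr rfl⟩
      · rintro ⟨k, hk, rfl | rfl⟩
        · exact Or.inl ⟨k, hk, rfl⟩
        · exact Or.inr ⟨k, hk, rfl⟩
    have hd : ∀ a ∈ Ξ₁, ∀ c ∈ Ξ₂, 2 ≤ |a - c| := by
      intro a ha c hc
      rw [abs_two_le_iff]
      rw [hΞ₁, Finset.mem_union] at ha
      rw [hΞ₂, Finset.mem_union] at hc
      rcases ha with ha | ha
      · obtain ⟨j, hj, rfl⟩ := Finset.mem_image.mp ha
        rcases hc with hc | hc
        · obtain ⟨k, hk, rfl⟩ := Finset.mem_image.mp hc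
          have := hΩ j hj k hk; omega
        · have hcN : c ∈ N₂ := (Finset.mem_inter.mp hc).2
          obtain ⟨k, hk, hck⟩ := (memN₂ c).mp hcN
          have := hΩ j hj k hk; omega
      · have haE : Even a := (Finset.mem_filter.mp (Finset.mem_sdiff.mp ha).1).2
        have haN : a ∉ N₂ := (Finset.mem_sdiff.mp ha).2
        obtain ⟨p, hp⟩ := haE
        rcases hc with hc | hc
        · obtain ⟨k, hk, rfl⟩ := Finset.mem_image.mp hc
          have h1 : a ≠ 2 * k := fun h => haN ((memN₂ a).mpr ⟨k, hk, Or.inl h⟩)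
          have h2 : a ≠ 2 * k + 2 := fun h => haN ((memN₂ a).mpr ⟨k, hk, Or.inr h⟩)
          omega
        · have hcN : c ∈ N₂ := (Finset.mem_inter.mp hc).2
          obtain ⟨k, hk, hck⟩ := (memN₂ c).mp hcN
          have h1 : a ≠ 2 * k := fun h => haN ((memN₂ a).mpr ⟨k, hk, Or.inl h⟩)
          have h2 : a ≠ 2 * k + 2 := fun h => haN ((memN₂ a).mpr ⟨k, hk, Or.inr h⟩)
          omega
    obtain ⟨z, hzZ, hz1, hz2⟩ := hg _ _ hd ζ₁ hζ₁.1 ζ₂ hζ₂.1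
    refine ⟨z, hzZ, ?_⟩
    intro i hiF
    refine ⟨?_, ?_, ?_⟩
    · intro hev
      obtain ⟨p, hp⟩ := hev
      by_cases hiN : i ∈ N₂
      · have hmem : i ∈ Ξ₂ := by
          rw [hΞ₂, Finset.mem_union]
          exact Or.inr (Finset.mem_inter.mpr
            ⟨Finset.mem_filter.mpr ⟨hiF, ⟨p, hp⟩⟩, hiN⟩)
        rw [hz2 i hmem, hp, show p + p = 2 * p by ring]
        exact hζ₂.2 p
      · have hmem : i ∈ Ξ₁ := by
          rw [hΞ₁, Finset.mem_union]
          exact Or.inr (Finset.mem_sdiff.mpr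
            ⟨Finset.mem_filter.mpr ⟨hiF, ⟨p, hp⟩⟩, hiN⟩)
        rw [hz1 i hmem, hp, show p + p = 2 * p by ring]
        exact hζ₁.2 p
    · intro j hj hij
      refine hz1 i ?_
      rw [hΞ₁, Finset.mem_union]
      exact Or.inl (Finset.mem_image.mpr ⟨j, hj, hij.symm⟩)
    · intro k hk hik
      refine hz2 i ?_
      rw [hΞ₂, Finset.mem_union]
      exact Or.inl (Finset.mem_image.mpr ⟨k, hk, hik.symm⟩)
  obtain ⟨z, hzZ, hz⟩ := inter_nonempty hZ.1 Q stage
  refine ⟨fun j => z (2 * j + 1), ⟨z, ⟨hzZ, fun j => (hz (2 * j)).1 ⟨j, by ring⟩⟩, rfl⟩, ?_, ?_⟩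
  · intro j hj; exact (hz (2 * j + 1)).2.1 j hj rfl
  · intro k hk; exact (hz (2 * k + 1)).2.2 k hk rfl

lemma lift_periodic {Z : Set (ℤ → B)} {b : B} {η : ℤ → B} (hη : η ∈ derived b Z)
    {P : ℤ} (hP : shiftZ P η = η) : ∃ ζ ∈ Z, shiftZ (2 * P) ζ = ζ := by
  obtain ⟨ζ, hζ, hψ⟩ := hη
  refine ⟨ζ, hζ.1, ?_⟩
  funext i
  have hper : ∀ j : ℤ, η (j - P) = η j := fun j => congrFun hP j
  rcases Int.even_or_odd i with ⟨j, hj⟩ | ⟨j, hj⟩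
  · have h1 := hζ.2 (j - P)
    have h2 := hζ.2 j
    rw [shiftZ_apply, hj, show j + j - 2 * P = 2 * (j - P) by ring, h1,
      show (j : ℤ) + j = 2 * j by ring, h2]
  · have h1 : ζ (2 * (j - P) + 1) = η (j - P) := congrFun hψ (j - P)
    have h2 : ζ (2 * j + 1) = η j := congrFun hψ j
    rw [shiftZ_apply, hj, show 2 * j + 1 - 2 * P = 2 * (j - P) + 1 by ring, h1, hper j]
    exact h2.symm

/-- Iterated halving construction. -/
def iterZ (b : B) (Z : Set (ℤ → B)) : ℕ → Set (ℤ → B)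
  | 0 => Z
  | k + 1 => derived b (iterZ b Z k)

lemma periodic_descend {Z : Set (ℤ → B)} {b : B} :
    ∀ k, (∃ η ∈ iterZ b Z k, ∃ P : ℤ, 0 < P ∧ shiftZ P η = η) →
      ∃ z ∈ Z, ∃ P : ℤ, 0 < P ∧ shiftZ P z = z := by
  intro k
  induction k with
  | zero => exact id
  | succ k ih =>
    rintro ⟨η, hη, P, hP, hper⟩
    obtain ⟨ζ, hζ, hper'⟩ := lift_periodic hη hper
    exact ih ⟨ζ, hζ, 2 * P, by omega, hper'⟩

lemma iter_props {Z : Set (ℤ → B)} {b : B} (hZ : IsSubshiftZ Z) (hne : Z.Nonempty)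
    (hg : Glue2 Z) :
    ∀ k, (∀ j, j < k → b ∈ occ (iterZ b Z j)) →
      IsSubshiftZ (iterZ b Z k) ∧ (iterZ b Z k).Nonempty ∧ Glue2 (iterZ b Z k) := by
  intro k
  induction k with
  | zero => exact fun _ => ⟨hZ, hne, hg⟩
  | succ k ih =>
    intro hocc
    obtain ⟨h1, h2, h3⟩ := ih (fun j hj => hocc j (by omega))
    exact ⟨derived_subshift h1 b, derived_nonempty h1 h3 (hocc k (by omega)),
      derived_glue2 h1 h3 b⟩

/-- Unwinding the interleaving: an element of `iterZ b Z k` produces an element of `Z`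
which equals `b` away from a single residue class mod `2^k`. -/
lemma liftb {Z : Set (ℤ → B)} {b : B} :
    ∀ k, ∀ ξ ∈ iterZ b Z k, ∃ ζ ∈ Z,
      (∀ t : ℤ, ζ (2 ^ k * t + (2 ^ k - 1)) = ξ t) ∧
      (∀ i : ℤ, (∀ t : ℤ, i ≠ 2 ^ k * t + (2 ^ k - 1)) → ζ i = b) := by
  intro k
  induction k with
  | zero =>
    intro ξ hξ
    refine ⟨ξ, hξ, fun t => by norm_num, fun i hi => absurd (by omega : i = 1 * i + (1 - 1)) ?_⟩
    simpa using hi i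
  | succ k ih =>
    intro ξ hξ
    obtain ⟨ζ', hζ'Zb, hψ⟩ := hξ
    obtain ⟨ζ, hζZ, hmain, hrest⟩ := ih ζ' hζ'Zb.1
    have hpow : (2:ℤ) ^ (k+1) = 2 * 2 ^ k := by rw [pow_succ]; ring
    have hpos : (0:ℤ) < 2 ^ k := by positivity
    refine ⟨ζ, hζZ, ?_, ?_⟩
    · intro t
      have h1 : ζ (2 ^ k * (2 * t + 1) + (2 ^ k - 1)) = ζ' (2 * t + 1) := hmain (2 * t + 1)
      have h2 : ζ' (2 * t + 1) = ξ t := congrFun hψ t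
      rw [show (2:ℤ) ^ (k+1) * t + (2 ^ (k+1) - 1) = 2 ^ k * (2 * t + 1) + (2 ^ k - 1) by
        rw [hpow]; ring, h1, h2]
    · intro i hi
      by_cases hcl : ∃ t : ℤ, i = 2 ^ k * t + (2 ^ k - 1)
      · obtain ⟨t, rfl⟩ := hcl
        rcases Int.even_or_odd t with ⟨s, hs⟩ | ⟨s, hs⟩
        · rw [hmain t, hs, show s + s = 2 * s by ring]
          exact hζ'Zb.2 s
        · exfalso
          refine hi s ?_
          rw [hpow, hs]; ring
      · push_neg at hcl
        exact hrest _ hcl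

lemma two_pow_ge {R : ℕ} : (2:ℤ) * R + 2 ≤ 2 ^ (R + 1) := by
  induction R with
  | zero => norm_num
  | succ R ih =>
    have h2 : (2:ℤ) ≤ 2 ^ (R + 1) := by
      calc (2:ℤ) = 2 ^ 1 := by norm_num
      _ ≤ 2 ^ (R + 1) := by
        apply pow_le_pow_right₀ <;> omega
    rw [pow_succ]
    push_cast
    nlinarith

/-- The core theorem: a nonempty subshift with distance-2 gluing contains a
shift-periodic point. -/
theorem core_periodic {Z : Set (ℤ → B)} (hZ : IsSubshiftZ Z) (hne : Z.Nonempty)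
    (hg : Glue2 Z) : ∃ z ∈ Z, ∃ P : ℤ, 0 < P ∧ shiftZ P z = z := by
  classical
  obtain ⟨n, hn⟩ : ∃ n, (occ Z).ncard ≤ n := ⟨(occ Z).ncard, le_refl _⟩
  induction n generalizing Z with
  | zero =>
    exfalso
    have h1 : 0 < (occ Z).ncard := (Set.ncard_pos (Set.toFinite _)).mpr (occ_nonempty hne)
    omega
  | succ n ih =>
    obtain ⟨b, hb⟩ := occ_nonempty hne
    by_cases hB : ∀ k, b ∈ occ (iterZ b Z k)
    · -- the constant configuration b is in Z
      have hprops : ∀ k, IsSubshiftZ (iterZ b Z k) ∧ (iterZ b Z k).Nonempty ∧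
          Glue2 (iterZ b Z k) := fun k => iter_props hZ hne hg k (fun j _ => hB j)
      have hbZ : ∃ z ∈ Z, ∀ i : ℤ, z i = b := by
        apply inter_nonempty hZ.1 (fun _ c => c = b)
        intro F
        set R : ℕ := F.sup (fun i => i.natAbs) with hR
        have hRb : ∀ i ∈ F, i.natAbs ≤ R := fun i hi => Finset.le_sup hi
        set k : ℕ := R + 1 with hk
        obtain ⟨ξ, hξ⟩ := (hprops k).2.1
        obtain ⟨ζ, hζZ, _, hrest⟩ := liftb k ξ hξ
        have hpow : (2:ℤ) * R + 2 ≤ 2 ^ k := two_pow_ge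
        have hpos : (0:ℤ) < 2 ^ k := by positivity
        refine ⟨shiftZ (-(R:ℤ) - 2 ^ k) ζ, hZ.2 _ _ hζZ, ?_⟩
        intro i hi
        rw [shiftZ_apply]
        apply hrest
        intro t ht
        have hiR : (i:ℤ) ≤ R ∧ -(R:ℤ) ≤ i := by
          have := hRb i hi
          omega
        have harg : (2:ℤ) ^ k ≤ i - (-(R:ℤ) - 2 ^ k) ∧
            i - (-(R:ℤ) - 2 ^ k) ≤ 2 ^ k + 2 * R := by omega
        rcases le_or_gt t 0 with htn | htp
        · have : (2:ℤ) ^ k * t ≤ 0 := mul_nonpos_iff.mpr (Or.inl ⟨le_of_lt hpos, htn⟩)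
          omega
        · have h1t : (1:ℤ) ≤ t := htp
          have : (2:ℤ) ^ k ≤ 2 ^ k * t := le_mul_of_one_le_right (le_of_lt hpos) h1t
          omega
      obtain ⟨z, hzZ, hz⟩ := hbZ
      refine ⟨z, hzZ, 1, one_pos, ?_⟩
      funext i
      rw [shiftZ_apply, hz, hz]
    · -- the alphabet eventually shrinks
      push_neg at hB
      have hex : ∃ k, b ∉ occ (iterZ b Z k) := hB
      set k₀ : ℕ := Nat.find hex with hk₀
      have hk₀spec : b ∉ occ (iterZ b Z k₀) := Nat.find_spec hex
      have hlt : ∀ j, j < k₀ → b ∈ occ (iterZ b Z j) := by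
        intro j hj
        by_contra h
        have hle : k₀ ≤ j := Nat.find_le h
        omega
      obtain ⟨h1, h2, h3⟩ := iter_props hZ hne hg k₀ hlt
      -- occ of iterate k₀ is contained in occ Z minus b
      have hchain : ∀ j, j ≤ k₀ → occ (iterZ b Z j) ⊆ occ Z := by
        intro j hj
        induction j with
        | zero => exact subset_rfl
        | succ j ihj =>
          exact (occ_derived_subset (Z := iterZ b Z j) b).trans (ihj (by omega))
      have hsub : occ (iterZ b Z k₀) ⊆ occ Z \ {b} := by
        intro c hc
        exact ⟨hchain k₀ le_rfl hc,
          fun h => hk₀spec (by rwa [Set.mem_singleton_iff.mp h] at hc)⟩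
      have hcard : (occ (iterZ b Z k₀)).ncard ≤ n := by
        have hle : (occ (iterZ b Z k₀)).ncard ≤ (occ Z \ {b}).ncard :=
          Set.ncard_le_ncard hsub (Set.toFinite _)
        have heq : (occ Z \ {b}).ncard = (occ Z).ncard - 1 :=
          Set.ncard_diff_singleton_of_mem hb
        have h1 : 0 < (occ Z).ncard := (Set.ncard_pos (Set.toFinite _)).mpr ⟨b, hb⟩
        omega
      exact periodic_descend k₀ (ih h1 h2 h3 hcard)

end Core

/-! ### From strong irreducibility to dense periodic points -/

def IsStronglyIrreducibleZ' {A : Type*} (X : Set (ℤ → A)) : Prop :=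
  ∃ Δ : Finset ℤ, ∀ Ω₁ Ω₂ : Finset ℤ,
    (∀ a ∈ Ω₁, ∀ d ∈ Δ, a - d ∉ Ω₂) →
    ∀ x₁ ∈ X, ∀ x₂ ∈ X, ∃ x ∈ X,
      (∀ i ∈ Ω₁, x i = x₁ i) ∧ (∀ i ∈ Ω₂, x i = x₂ i)

section TopLevel

variable {A : Type*} [TopologicalSpace A] [DiscreteTopology A] [Finite A]

/-- From strong irreducibility: gluing along sets at distance `≥ m`. -/
lemma si_glue {X : Set (ℤ → A)} (hsi : IsStronglyIrreducibleZ' X) :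
    ∃ m : ℕ, 0 < m ∧ ∀ Ω₁ Ω₂ : Finset ℤ, (∀ a ∈ Ω₁, ∀ c ∈ Ω₂, (m:ℤ) ≤ |a - c|) →
      ∀ x₁ ∈ X, ∀ x₂ ∈ X, ∃ x ∈ X,
        (∀ i ∈ Ω₁, x i = x₁ i) ∧ (∀ i ∈ Ω₂, x i = x₂ i) := by
  obtain ⟨Δ, hΔ⟩ := hsi
  refine ⟨Δ.sup (fun d => d.natAbs) + 1, Nat.succ_pos _, ?_⟩
  intro Ω₁ Ω₂ hdist x₁ hx₁ x₂ hx₂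
  refine hΔ Ω₁ Ω₂ ?_ x₁ hx₁ x₂ hx₂
  intro a ha d hd hmem
  have h1 := hdist a ha (a - d) hmem
  have h2 : d.natAbs ≤ Δ.sup (fun d => d.natAbs) := Finset.le_sup hd
  have h3 : |a - (a - d)| = |d| := by rw [show a - (a - d) = d by ring]
  rw [h3] at h1
  have h4 : |d| = (d.natAbs : ℤ) := Int.abs_eq_natAbs d
  omega

lemma bs {T j k n : ℤ} (hT : 0 ≤ T) (h : j + n ≤ k) : j * T + n * T ≤ k * T := by
  calc j * T + n * T = (j + n) * T := by ring
  _ ≤ k * T := mul_le_mul_of_nonneg_right h hT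

/-- Block recoding map. -/
def blockMap (T : ℕ) (z : ℤ → A) : ℤ → (Fin T → A) :=
  fun j r => z (j * (T:ℤ) + (r:ℕ))

/-- The set of configurations of `X` showing the window `x₀|[0,L)` at every position
`j*T`. -/
def Ysk (X : Set (ℤ → A)) (x₀ : ℤ → A) (L T : ℕ) : Set (ℤ → A) :=
  {z ∈ X | ∀ j : ℤ, ∀ s : ℕ, s < L → z (j * (T:ℤ) + (s:ℕ)) = x₀ (s:ℕ)}

lemma blockMap_shift (T : ℕ) (n : ℤ) (z : ℤ → A) :
    blockMap T (shiftZ (n * (T:ℤ)) z) = shiftZ n (blockMap T z) := by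
  funext j r
  simp only [blockMap, shiftZ_apply]
  congr 1
  ring

lemma blockMap_inj {T : ℕ} (hT : 0 < T) : Function.Injective (blockMap (A := A) T) := by
  intro z₁ z₂ h
  funext i
  have hTZ : (0:ℤ) < (T:ℤ) := by exact_mod_cast hT
  set j : ℤ := i / (T:ℤ) with hj
  set s : ℤ := i % (T:ℤ) with hs
  have hs0 : 0 ≤ s := Int.emod_nonneg i (by omega)
  have hsT : s < (T:ℤ) := Int.emod_lt_of_pos i hTZ
  have hdecomp : i = j * (T:ℤ) + s := by
    have h0 := Int.mul_ediv_add_emod i (T:ℤ)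
    rw [hj, hs]
    linarith
  have hsn : ((s.toNat : ℕ) : ℤ) = s := Int.toNat_of_nonneg hs0
  have hsnT : s.toNat < T := by omega
  have h1 := congrFun (congrFun h j) ⟨s.toNat, hsnT⟩
  simp only [blockMap] at h1
  rw [hsn] at h1
  rw [hdecomp]
  exact h1

section Blocks

variable {X : Set (ℤ → A)} {x₀ : ℤ → A} {L m : ℕ}

/-- Decode the block index from a position. -/
lemma block_decode {T : ℕ} (hT : 0 < T) {i j : ℤ} {s : ℕ} (hs : s < T)
    (hij : i = j * (T:ℤ) + (s:ℕ)) : j = i / (T:ℤ) := by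
  subst hij
  have hTne : ((T:ℤ)) ≠ 0 := by exact_mod_cast hT.ne'
  rw [show j * (T:ℤ) + (s:ℕ) = (s:ℕ) + (T:ℤ) * j by ring,
    Int.add_mul_ediv_left _ _ hTne,
    Int.ediv_eq_zero_of_lt (by positivity) (by exact_mod_cast hs)]
  ring

lemma Ysk_closed (hX : IsSubshiftZ X) : IsClosed (Ysk X x₀ L (L + m)) := by
  have h : Ysk X x₀ L (L + m) = X ∩ ⋂ j : ℤ, ⋂ s : ℕ,
      {z : ℤ → A | s < L → z (j * ((L + m : ℕ):ℤ) + (s:ℕ)) = x₀ (s:ℕ)} := by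
    ext z
    simp only [Ysk, Set.mem_inter_iff, Set.mem_iInter, Set.mem_setOf_eq, Set.mem_sep_iff]
  rw [h]
  refine hX.1.inter (isClosed_iInter fun j => isClosed_iInter fun s => ?_)
  by_cases hs : s < L
  · have : {z : ℤ → A | s < L → z (j * ((L + m : ℕ):ℤ) + (s:ℕ)) = x₀ (s:ℕ)}
        = (fun z : ℤ → A => z (j * ((L + m : ℕ):ℤ) + (s:ℕ))) ⁻¹' {x₀ (s:ℕ)} := by
      ext z; simp [hs]
    rw [this]
    exact (isClosed_discrete _).preimage (continuous_apply _)
  · have : {z : ℤ → A | s < L → z (j * ((L + m : ℕ):ℤ) + (s:ℕ)) = x₀ (s:ℕ)} = Set.univ := by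
      ext z; simp [hs]
    rw [this]
    exact isClosed_univ

lemma Ysk_shift (hX : IsSubshiftZ X) {z : ℤ → A} (hz : z ∈ Ysk X x₀ L (L + m)) (n : ℤ) :
    shiftZ (n * ((L + m : ℕ):ℤ)) z ∈ Ysk X x₀ L (L + m) := by
  refine ⟨hX.2 _ _ hz.1, ?_⟩
  intro j s hs
  rw [shiftZ_apply, show j * ((L + m : ℕ):ℤ) + (s:ℕ) - n * ((L + m : ℕ):ℤ)
    = (j - n) * ((L + m : ℕ):ℤ) + (s:ℕ) by ring]
  exact hz.2 (j - n) s hs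

variable (hX : IsSubshiftZ X) (hm : 0 < m) (hx₀ : x₀ ∈ X)
  (hglue : ∀ Ω₁ Ω₂ : Finset ℤ, (∀ a ∈ Ω₁, ∀ c ∈ Ω₂, ((m:ℕ):ℤ) ≤ |a - c|) →
      ∀ x₁ ∈ X, ∀ x₂ ∈ X, ∃ x ∈ X,
        (∀ i ∈ Ω₁, x i = x₁ i) ∧ (∀ i ∈ Ω₂, x i = x₂ i))

include hX hm hx₀ hglue

lemma Ysk_nonempty : (Ysk X x₀ L (L + m)).Nonempty := by
  classical
  set T : ℕ := L + m with hTdef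
  have hT0 : (0:ℤ) ≤ (T:ℤ) := by positivity
  have hTLm : (T:ℤ) = (L:ℤ) + (m:ℤ) := by push_cast [hTdef]; ring
  have stage0 : ∀ FB : Finset ℤ, ∃ z ∈ X, ∀ j ∈ FB, ∀ s : ℕ, s < L →
      z (j * (T:ℤ) + (s:ℕ)) = x₀ (s:ℕ) := by
    intro FB
    induction FB using Finset.induction_on with
    | empty => exact ⟨x₀, hx₀, by simp⟩
    | @insert j₀ FB' hj₀ ih =>
      obtain ⟨z, hzX, hz⟩ := ih
      set Ξ₁ : Finset ℤ := FB'.biUnion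
        (fun j => (Finset.range L).image (fun s => j * (T:ℤ) + (s:ℕ))) with hΞ₁
      set Ξ₂ : Finset ℤ := (Finset.range L).image (fun s => j₀ * (T:ℤ) + (s:ℕ)) with hΞ₂
      have hd : ∀ a ∈ Ξ₁, ∀ c ∈ Ξ₂, ((m:ℕ):ℤ) ≤ |a - c| := by
        intro a ha c hc
        rw [abs_le_iff']
        simp only [hΞ₁, hΞ₂, Finset.mem_biUnion, Finset.mem_image, Finset.mem_range] at ha hc
        obtain ⟨j, hjF, s, hsL, rfl⟩ := ha
        obtain ⟨s', hs'L, rfl⟩ := hc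
        have hsZ : ((s:ℕ):ℤ) < (L:ℤ) := by exact_mod_cast hsL
        have hs'Z : ((s':ℕ):ℤ) < (L:ℤ) := by exact_mod_cast hs'L
        have hjne : j ≠ j₀ := fun h => hj₀ (h ▸ hjF)
        rcases lt_or_gt_of_ne hjne with hlt | hgt
        · right
          have := bs hT0 (show j + 1 ≤ j₀ by omega)
          have hs0 : (0:ℤ) ≤ (s:ℕ) := by positivity
          have hs'0 : (0:ℤ) ≤ (s':ℕ) := by positivity
          linarith
        · left
          have := bs hT0 (show j₀ + 1 ≤ j by omega)
          have hs0 : (0:ℤ) ≤ (s:ℕ) := by positivity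
          have hs'0 : (0:ℤ) ≤ (s':ℕ) := by positivity
          linarith
      obtain ⟨z', hz'X, hz'1, hz'2⟩ := hglue _ _ hd z hzX (shiftZ (j₀ * (T:ℤ)) x₀)
        (hX.2 _ _ hx₀)
      refine ⟨z', hz'X, ?_⟩
      intro j hj s hsL
      rcases Finset.mem_insert.mp hj with rfl | hjF
      · rw [hz'2 _ (Finset.mem_image.mpr ⟨s, Finset.mem_range.mpr hsL, rfl⟩),
          shiftZ_apply, show j * (T:ℤ) + (s:ℕ) - j * (T:ℤ) = ((s:ℕ):ℤ) by ring]
      · rw [hz'1 _ (Finset.mem_biUnion.mpr ⟨j, hjF,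
          Finset.mem_image.mpr ⟨s, Finset.mem_range.mpr hsL, rfl⟩⟩)]
        exact hz j hjF s hsL
  have hstage : ∀ F : Finset ℤ, ∃ z ∈ X, ∀ i ∈ F,
      (∀ j : ℤ, ∀ s : ℕ, s < L → i = j * (T:ℤ) + (s:ℕ) → z i = x₀ (s:ℕ)) := by
    intro F
    obtain ⟨z, hzX, hz⟩ := stage0 (F.image (fun i => i / (T:ℤ)))
    refine ⟨z, hzX, ?_⟩
    intro i hi j s hsL hij
    have hj : j = i / (T:ℤ) := block_decode (by omega) (by omega) hij
    rw [hij]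
    exact hz j (Finset.mem_image.mpr ⟨i, hi, hj.symm⟩) s hsL
  obtain ⟨z, hzX, hz⟩ := inter_nonempty hX.1
    (fun i c => ∀ j : ℤ, ∀ s : ℕ, s < L → i = j * (T:ℤ) + (s:ℕ) → c = x₀ (s:ℕ)) hstage
  exact ⟨z, hzX, fun j s hs => hz (j * (T:ℤ) + (s:ℕ)) j s hs rfl⟩

lemma glue2_blocks : Glue2 (blockMap (L + m) '' Ysk X x₀ L (L + m)) := by
  classical
  set T : ℕ := L + m with hTdef
  have hT0 : (0:ℤ) ≤ (T:ℤ) := by positivity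
  have hTLm : (T:ℤ) = (L:ℤ) + (m:ℤ) := by push_cast [hTdef]; ring
  rintro Ω₁ Ω₂ hdist η₁ ⟨ζ₁, hζ₁, rfl⟩ η₂ ⟨ζ₂, hζ₂, rfl⟩
  have hΩ : ∀ j ∈ Ω₁, ∀ k ∈ Ω₂, 2 ≤ j - k ∨ j - k ≤ -2 := by
    intro j hj k hk; exact (abs_two_le_iff _).mp (hdist j hj k hk)
  have hdisj : ∀ j, j ∈ Ω₁ → j ∈ Ω₂ → False := by
    intro j h1 h2
    have := hΩ j h1 j h2; omega
  set Q : ℤ → A → Prop := fun i c =>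
    (∀ j ∈ Ω₁, ∀ s : ℕ, s < T → i = j * (T:ℤ) + (s:ℕ) → c = ζ₁ i) ∧
    (∀ k ∈ Ω₂, ∀ s : ℕ, s < T → i = k * (T:ℤ) + (s:ℕ) → c = ζ₂ i) ∧
    (∀ j : ℤ, ∀ s : ℕ, s < L → i = j * (T:ℤ) + (s:ℕ) → c = x₀ (s:ℕ)) with hQ
  have hstage : ∀ F : Finset ℤ, ∃ z ∈ X, ∀ i ∈ F, Q i (z i) := by
    intro F
    set FB : Finset ℤ := F.image (fun i => i / (T:ℤ)) with hFB
    set S₂ : Finset ℤ := ((FB \ Ω₁) \ Ω₂).filter (fun j => j - 1 ∈ Ω₂) with hS₂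
    set S₁ : Finset ℤ := ((FB \ Ω₁) \ Ω₂) \ S₂ with hS₁
    have hS₂mem : ∀ k ∈ S₂, k ∉ Ω₁ ∧ k ∉ Ω₂ ∧ k - 1 ∈ Ω₂ := by
      intro k hk
      simp only [hS₂, Finset.mem_filter, Finset.mem_sdiff] at hk
      exact ⟨hk.1.1.2, hk.1.2, hk.2⟩
    have hS₁mem : ∀ j ∈ S₁, j ∉ Ω₁ ∧ j ∉ Ω₂ ∧ j - 1 ∉ Ω₂ := by
      intro j hj
      simp only [hS₁, hS₂, Finset.mem_sdiff, Finset.mem_filter] at hj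
      refine ⟨hj.1.1.2, hj.1.2, fun h => hj.2 ⟨hj.1, h⟩⟩
    set Ξ₁ : Finset ℤ := Ω₁.biUnion
        (fun j => (Finset.range T).image (fun s => j * (T:ℤ) + (s:ℕ)))
      ∪ S₁.biUnion (fun j => (Finset.range L).image (fun s => j * (T:ℤ) + (s:ℕ))) with hΞ₁
    set Ξ₂ : Finset ℤ := Ω₂.biUnion
        (fun j => (Finset.range T).image (fun s => j * (T:ℤ) + (s:ℕ)))
      ∪ S₂.biUnion (fun j => (Finset.range L).image (fun s => j * (T:ℤ) + (s:ℕ))) with hΞ₂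
    have hd : ∀ a ∈ Ξ₁, ∀ c ∈ Ξ₂, ((m:ℕ):ℤ) ≤ |a - c| := by
      intro a ha c hc
      rw [abs_le_iff']
      simp only [hΞ₁, hΞ₂, Finset.mem_union, Finset.mem_biUnion, Finset.mem_image,
        Finset.mem_range] at ha hc
      rcases ha with ⟨j, hj, s, hsT, rfl⟩ | ⟨j, hj, s, hsL, rfl⟩ <;>
        rcases hc with ⟨k, hk, s', hs'T, rfl⟩ | ⟨k, hk, s', hs'L, rfl⟩
      · -- full Ω₁ vs full Ω₂
        have hsZ : ((s:ℕ):ℤ) < (T:ℤ) := by exact_mod_cast hsT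
        have hs'Z : ((s':ℕ):ℤ) < (T:ℤ) := by exact_mod_cast hs'T
        have hs0 : (0:ℤ) ≤ (s:ℕ) := by positivity
        have hs'0 : (0:ℤ) ≤ (s':ℕ) := by positivity
        rcases hΩ j hj k hk with h | h
        · left
          have := bs hT0 (show k + 2 ≤ j by omega)
          linarith
        · right
          have := bs hT0 (show j + 2 ≤ k by omega)
          linarith
      · -- full Ω₁ vs w-block S₂
        have hsZ : ((s:ℕ):ℤ) < (T:ℤ) := by exact_mod_cast hsT
        have hs'Z : ((s':ℕ):ℤ) < (L:ℤ) := by exact_mod_cast hs'L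
        have hs0 : (0:ℤ) ≤ (s:ℕ) := by positivity
        have hs'0 : (0:ℤ) ≤ (s':ℕ) := by positivity
        obtain ⟨hk1, hk2, hk3⟩ := hS₂mem k hk
        rcases hΩ j hj (k-1) hk3 with h | h
        · left
          have := bs hT0 (show k + 1 ≤ j by omega)
          linarith
        · right
          have := bs hT0 (show j + 3 ≤ k by omega)
          linarith
      · -- w-block S₁ vs full Ω₂
        have hsZ : ((s:ℕ):ℤ) < (L:ℤ) := by exact_mod_cast hsL
        have hs'Z : ((s':ℕ):ℤ) < (T:ℤ) := by exact_mod_cast hs'T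
        have hs0 : (0:ℤ) ≤ (s:ℕ) := by positivity
        have hs'0 : (0:ℤ) ≤ (s':ℕ) := by positivity
        obtain ⟨hj1, hj2, hj3⟩ := hS₁mem j hj
        have hne1 : j ≠ k := fun h => hj2 (h ▸ hk)
        have hne2 : k ≠ j - 1 := fun h => hj3 (h ▸ hk)
        rcases lt_or_gt_of_ne hne1 with hlt | hgt
        · right
          have := bs hT0 (show j + 1 ≤ k by omega)
          linarith
        · left
          have := bs hT0 (show k + 2 ≤ j by omega)
          linarith
      · -- w-block S₁ vs w-block S₂
        have hsZ : ((s:ℕ):ℤ) < (L:ℤ) := by exact_mod_cast hsL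
        have hs'Z : ((s':ℕ):ℤ) < (L:ℤ) := by exact_mod_cast hs'L
        have hs0 : (0:ℤ) ≤ (s:ℕ) := by positivity
        have hs'0 : (0:ℤ) ≤ (s':ℕ) := by positivity
        have hne : j ≠ k := by
          intro h
          subst h
          simp only [hS₁, Finset.mem_sdiff] at hj
          exact hj.2 hk
        rcases lt_or_gt_of_ne hne with hlt | hgt
        · right
          have := bs hT0 (show j + 1 ≤ k by omega)
          linarith
        · left
          have := bs hT0 (show k + 1 ≤ j by omega)
          linarith
    obtain ⟨z, hzX, hz1, hz2⟩ := hglue _ _ hd ζ₁ hζ₁.1 ζ₂ hζ₂.1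
    refine ⟨z, hzX, ?_⟩
    intro i hiF
    refine ⟨?_, ?_, ?_⟩
    · intro j hj s hsT hij
      refine hz1 i ?_
      rw [hΞ₁, Finset.mem_union]
      exact Or.inl (Finset.mem_biUnion.mpr ⟨j, hj,
        Finset.mem_image.mpr ⟨s, Finset.mem_range.mpr hsT, hij.symm⟩⟩)
    · intro k hk s hsT hij
      refine hz2 i ?_
      rw [hΞ₂, Finset.mem_union]
      exact Or.inl (Finset.mem_biUnion.mpr ⟨k, hk,
        Finset.mem_image.mpr ⟨s, Finset.mem_range.mpr hsT, hij.symm⟩⟩)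
    · intro j s hsL hij
      have hjFB : j ∈ FB := by
        have hj : j = i / (T:ℤ) := block_decode (by omega) (by omega) hij
        exact Finset.mem_image.mpr ⟨i, hiF, hj.symm⟩
      by_cases hj1 : j ∈ Ω₁
      · have := hz1 i (by
          rw [hΞ₁, Finset.mem_union]
          exact Or.inl (Finset.mem_biUnion.mpr ⟨j, hj1,
            Finset.mem_image.mpr ⟨s, Finset.mem_range.mpr (by omega), hij.symm⟩⟩))
        rw [this, hij]
        exact hζ₁.2 j s hsL
      by_cases hj2 : j ∈ Ω₂
      · have := hz2 i (by
          rw [hΞ₂, Finset.mem_union]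
          exact Or.inl (Finset.mem_biUnion.mpr ⟨j, hj2,
            Finset.mem_image.mpr ⟨s, Finset.mem_range.mpr (by omega), hij.symm⟩⟩))
        rw [this, hij]
        exact hζ₂.2 j s hsL
      by_cases hjS₂ : j ∈ S₂
      · have := hz2 i (by
          rw [hΞ₂, Finset.mem_union]
          exact Or.inr (Finset.mem_biUnion.mpr ⟨j, hjS₂,
            Finset.mem_image.mpr ⟨s, Finset.mem_range.mpr hsL, hij.symm⟩⟩))
        rw [this, hij]
        exact hζ₂.2 j s hsL
      · have hjS₁ : j ∈ S₁ := by
          rw [hS₁, Finset.mem_sdiff]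
          exact ⟨by rw [Finset.mem_sdiff, Finset.mem_sdiff]; exact ⟨⟨hjFB, hj1⟩, hj2⟩, hjS₂⟩
        have := hz1 i (by
          rw [hΞ₁, Finset.mem_union]
          exact Or.inr (Finset.mem_biUnion.mpr ⟨j, hjS₁,
            Finset.mem_image.mpr ⟨s, Finset.mem_range.mpr hsL, hij.symm⟩⟩))
        rw [this, hij]
        exact hζ₁.2 j s hsL
  obtain ⟨z, hzX, hz⟩ := inter_nonempty hX.1 Q hstage
  have hzY : z ∈ Ysk X x₀ L T := by
    refine ⟨hzX, ?_⟩
    intro j s hs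
    exact (hz (j * (T:ℤ) + (s:ℕ))).2.2 j s hs rfl
  refine ⟨blockMap T z, ⟨z, hzY, rfl⟩, ?_, ?_⟩
  · intro j hj
    funext r
    exact (hz (j * (T:ℤ) + (r:ℕ))).1 j hj r r.2 rfl
  · intro k hk
    funext r
    exact (hz (k * (T:ℤ) + (r:ℕ))).2.1 k hk r r.2 rfl

end Blocks

/-- Dense periodic points for strongly irreducible subshifts over ℤ. -/
theorem dense_periodic {X : Set (ℤ → A)} (hX : IsSubshiftZ X)
    (hsi : IsStronglyIrreducibleZ' X) {x₀ : ℤ → A} (hx₀ : x₀ ∈ X) (L : ℕ) :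
    ∃ p ∈ X, (∃ P : ℤ, 0 < P ∧ shiftZ P p = p) ∧ ∀ s : ℕ, s < L → p (s:ℕ) = x₀ (s:ℕ) := by
  obtain ⟨m, hm, hglue⟩ := si_glue hsi
  set T : ℕ := L + m with hTdef
  set Y : Set (ℤ → A) := Ysk X x₀ L T with hY
  set Z₀ : Set (ℤ → (Fin T → A)) := blockMap T '' Y with hZ₀
  have hYcl : IsClosed Y := Ysk_closed hX
  have hYne : Y.Nonempty := Ysk_nonempty hX hm hx₀ hglue
  have hZ₀sub : IsSubshiftZ Z₀ := by
    constructor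
    · have hcont : Continuous (blockMap (A := A) T) :=
        continuous_pi fun j => continuous_pi fun r => continuous_apply _
      exact (hYcl.isCompact.image hcont).isClosed
    · rintro n η ⟨ζ, hζ, rfl⟩
      exact ⟨shiftZ (n * (T:ℤ)) ζ, Ysk_shift hX hζ n, blockMap_shift T n ζ⟩
  have hZ₀ne : Z₀.Nonempty := hYne.image _
  have hZ₀g : Glue2 Z₀ := glue2_blocks hX hm hx₀ hglue
  obtain ⟨η, hη, P, hP, hper⟩ := core_periodic hZ₀sub hZ₀ne hZ₀g
  obtain ⟨ζ, hζY, rfl⟩ := hη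
  have hTpos : 0 < T := by omega
  have hζper : shiftZ (P * (T:ℤ)) ζ = ζ := by
    apply blockMap_inj hTpos
    rw [blockMap_shift, hper]
  refine ⟨ζ, hζY.1, ⟨P * (T:ℤ), ?_, hζper⟩, ?_⟩
  · have : (0:ℤ) < (T:ℤ) := by exact_mod_cast hTpos
    positivity
  · intro s hs
    have := hζY.2 0 s hs
    rwa [show (0:ℤ) * (T:ℤ) + (s:ℕ) = ((s:ℕ):ℤ) by ring] at this

end TopLevel

section Aut

variable {A : Type*} [Finite A] [TopologicalSpace A] [DiscreteTopology A]
variable {X : Set (ℤ → A)}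

lemma radius (hX : IsSubshiftZ X) (f : ShiftAutZ X) :
    ∃ R : ℕ, ∀ x y : {x : ℤ → A // x ∈ X},
      (∀ i : ℤ, i.natAbs ≤ R → (x : ℤ → A) i = (y : ℤ → A) i) →
      (f.toEquiv x : ℤ → A) 0 = (f.toEquiv y : ℤ → A) 0 := by
  by_contra hcon
  push_neg at hcon
  haveI : CompactSpace {x : ℤ → A // x ∈ X} := isCompact_iff_compactSpace.mp hX.1.isCompact
  set g : {x : ℤ → A // x ∈ X} → A := fun x => (f.toEquiv x : ℤ → A) 0 with hg
  have hgc : Continuous g := (continuous_apply (0:ℤ)).comp f.continuous_toFun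
  set K : ℕ → Set ({x : ℤ → A // x ∈ X} × {x : ℤ → A // x ∈ X}) := fun n =>
    {p | (∀ i : ℤ, i.natAbs ≤ n → (p.1 : ℤ → A) i = (p.2 : ℤ → A) i) ∧ g p.1 ≠ g p.2}
    with hK
  have hKcl : ∀ n, IsClosed (K n) := by
    intro n
    have h1 : IsClosed {p : {x : ℤ → A // x ∈ X} × {x : ℤ → A // x ∈ X} |
        ∀ i : ℤ, i.natAbs ≤ n → (p.1 : ℤ → A) i = (p.2 : ℤ → A) i} := by
      have heq : {p : {x : ℤ → A // x ∈ X} × {x : ℤ → A // x ∈ X} |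
          ∀ i : ℤ, i.natAbs ≤ n → (p.1 : ℤ → A) i = (p.2 : ℤ → A) i} =
        ⋂ i : ℤ, {p : {x : ℤ → A // x ∈ X} × {x : ℤ → A // x ∈ X} |
          i.natAbs ≤ n → (p.1 : ℤ → A) i = (p.2 : ℤ → A) i} := by
        ext p; simp
      rw [heq]
      refine isClosed_iInter fun i => ?_
      by_cases hi : i.natAbs ≤ n
      · have heq2 : {p : {x : ℤ → A // x ∈ X} × {x : ℤ → A // x ∈ X} |
            i.natAbs ≤ n → (p.1 : ℤ → A) i = (p.2 : ℤ → A) i} =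
          {p : {x : ℤ → A // x ∈ X} × {x : ℤ → A // x ∈ X} |
            (p.1 : ℤ → A) i = (p.2 : ℤ → A) i} := by
          ext p; simp [hi]
        rw [heq2]
        exact isClosed_eq
          (((continuous_apply i).comp continuous_subtype_val).comp continuous_fst)
          (((continuous_apply i).comp continuous_subtype_val).comp continuous_snd)
      · have heq2 : {p : {x : ℤ → A // x ∈ X} × {x : ℤ → A // x ∈ X} |
            i.natAbs ≤ n → (p.1 : ℤ → A) i = (p.2 : ℤ → A) i} = Set.univ := by
          ext p; simp [hi]
        rw [heq2]; exact isClosed_univ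
    have h2 : IsClosed {p : {x : ℤ → A // x ∈ X} × {x : ℤ → A // x ∈ X} |
        g p.1 ≠ g p.2} :=
      (isClosed_discrete {q : A × A | q.1 ≠ q.2}).preimage
        ((hgc.comp continuous_fst).prodMk (hgc.comp continuous_snd))
    exact h1.inter h2
  have hKne : ∀ n, (K n).Nonempty := by
    intro n
    obtain ⟨x, y, hagree, hne⟩ := hcon n
    exact ⟨(x, y), hagree, hne⟩
  have hdir : Directed (· ⊇ ·) K := by
    intro a b
    refine ⟨max a b, fun p hp => ⟨fun i hi => hp.1 i (le_trans hi (le_max_left a b)), hp.2⟩,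
      fun p hp => ⟨fun i hi => hp.1 i (le_trans hi (le_max_right a b)), hp.2⟩⟩
  obtain ⟨p, hp⟩ := IsCompact.nonempty_iInter_of_directed_nonempty_isCompact_isClosed
    K hdir hKne (fun n => (hKcl n).isCompact) hKcl
  simp only [Set.mem_iInter] at hp
  have hxy : p.1 = p.2 := by
    refine Subtype.ext (funext fun i => ?_)
    exact (hp i.natAbs).1 i le_rfl
  exact (hp 0).2 (by rw [hxy])

lemma local_eval (hX : IsSubshiftZ X) (f : ShiftAutZ X) {R : ℕ}
    (hR : ∀ x y : {x : ℤ → A // x ∈ X},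
      (∀ i : ℤ, i.natAbs ≤ R → (x : ℤ → A) i = (y : ℤ → A) i) →
      (f.toEquiv x : ℤ → A) 0 = (f.toEquiv y : ℤ → A) 0)
    (x y : {x : ℤ → A // x ∈ X}) (i : ℤ)
    (hagree : ∀ s : ℤ, s.natAbs ≤ R → (x : ℤ → A) (i + s) = (y : ℤ → A) (i + s)) :
    (f.toEquiv x : ℤ → A) i = (f.toEquiv y : ℤ → A) i := by
  set x' : {x : ℤ → A // x ∈ X} := ⟨shiftZ (-i) (x : ℤ → A), hX.2 _ _ x.2⟩ with hx'
  set y' : {x : ℤ → A // x ∈ X} := ⟨shiftZ (-i) (y : ℤ → A), hX.2 _ _ y.2⟩ with hy'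
  have hfx : (f.toEquiv x' : ℤ → A) = shiftZ (-i) (f.toEquiv x : ℤ → A) :=
    f.equivariant (-i) x x' rfl
  have hfy : (f.toEquiv y' : ℤ → A) = shiftZ (-i) (f.toEquiv y : ℤ → A) :=
    f.equivariant (-i) y y' rfl
  have h0 : (f.toEquiv x' : ℤ → A) 0 = (f.toEquiv y' : ℤ → A) 0 := by
    refine hR x' y' fun s hs => ?_
    show shiftZ (-i) (x : ℤ → A) s = shiftZ (-i) (y : ℤ → A) s
    rw [shiftZ_apply, shiftZ_apply, show s - -i = i + s by ring]
    exact hagree s hs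
  have hx0 : (f.toEquiv x' : ℤ → A) 0 = (f.toEquiv x : ℤ → A) i := by
    rw [hfx, shiftZ_apply, show (0:ℤ) - -i = i by ring]
  have hy0 : (f.toEquiv y' : ℤ → A) 0 = (f.toEquiv y : ℤ → A) i := by
    rw [hfy, shiftZ_apply, show (0:ℤ) - -i = i by ring]
  rw [← hx0, ← hy0, h0]

lemma per_period {n : ℤ} {z : ℤ → A} (hz : shiftZ n z = z) :
    ∀ (k : ℤ) (i : ℤ), z (i - n * k) = z i := by
  have hbase : ∀ w : ℤ, z (w - n) = z w := fun w => congrFun hz w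
  intro k
  induction k using Int.induction_on with
  | zero => intro i; norm_num
  | succ k ih =>
    intro i
    rw [show i - n * ((k:ℤ) + 1) = (i - n * k) - n by ring, hbase, ih]
  | pred k ih =>
    intro i
    have := hbase (i - n * (-(k:ℤ) - 1) )
    rw [show i - n * (-(k:ℤ) - 1) - n = i - n * (-(k:ℤ)) by ring] at this
    rw [← this, ih]

lemma per_finite {n : ℤ} (hn : 0 < n) :
    Finite {x : {x : ℤ → A // x ∈ X} // shiftZ n (x : ℤ → A) = (x : ℤ → A)} := by
  set e : {x : {x : ℤ → A // x ∈ X} // shiftZ n (x : ℤ → A) = (x : ℤ → A)} →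
      (Fin n.toNat → A) := fun x k => (x.1 : ℤ → A) ((k : ℕ) : ℤ) with he
  refine Finite.of_injective e fun x y hxy => ?_
  refine Subtype.ext (Subtype.ext (funext fun i => ?_))
  have hper1 := per_period (A := A) x.2
  have hper2 := per_period (A := A) y.2
  have hmod : i - n * (i / n) = i % n := by
    have := Int.mul_ediv_add_emod i n
    linarith
  have h0 : (0:ℤ) ≤ i % n := Int.emod_nonneg i (by omega)
  have h1 : i % n < n := Int.emod_lt_of_pos i hn
  have hk : (i % n).toNat < n.toNat := by omega
  have hcast : (((i % n).toNat : ℕ) : ℤ) = i % n := Int.toNat_of_nonneg h0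
  have hx := hper1 (i / n) i
  have hy := hper2 (i / n) i
  rw [hmod] at hx hy
  have := congrFun hxy ⟨(i % n).toNat, hk⟩
  simp only [he] at this
  rw [hcast] at this
  rw [← hx, ← hy, this]

/-- The homomorphism from `Aut(X)` to the permutations of the `n`-periodic points. -/
def permHom (n : ℤ) :
    ShiftAutZ X →*
      Equiv.Perm {x : {x : ℤ → A // x ∈ X} // shiftZ n (x : ℤ → A) = (x : ℤ → A)} where
  toFun f := Equiv.Perm.subtypePerm f.toEquiv (by
    intro x
    constructor
    · intro hx
      have h2 := f.equivariant_symm n (f.toEquiv x) (f.toEquiv x) hx.symm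
      rw [Equiv.symm_apply_apply] at h2
      exact h2.symm
    · intro hx
      exact (f.equivariant n x x hx.symm).symm)
  map_one' := by
    ext x
    rfl
  map_mul' f g := by
    ext x
    rfl

theorem main_aux (hX : IsSubshiftZ X) (hsi : IsStronglyIrreducibleZ' X) :
    ∀ f : ShiftAutZ X, f ≠ 1 → ∃ K : Subgroup (ShiftAutZ X), K.FiniteIndex ∧ f ∉ K := by
  intro f hf
  -- find a point moved by f
  have hmove : ∃ x : {x : ℤ → A // x ∈ X}, f.toEquiv x ≠ x := by
    by_contra h
    push_neg at h
    exact hf (ShiftAutZ.ext' (Equiv.ext h))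
  obtain ⟨x, hx⟩ := hmove
  have hfun : (f.toEquiv x : ℤ → A) ≠ (x : ℤ → A) := fun h => hx (Subtype.ext h)
  obtain ⟨i, hi⟩ := Function.ne_iff.mp hfun
  obtain ⟨R, hR⟩ := radius hX f
  -- a periodic point agreeing with x on the window [i-R, i+R]
  set c : ℤ := i - R with hc
  obtain ⟨p, hpX, ⟨P, hP, hPper⟩, hpwin⟩ :=
    dense_periodic hX hsi (hX.2 (-c) (x : ℤ → A) x.2) (2 * R + 1)
  set q : ℤ → A := shiftZ c p with hq
  have hqX : q ∈ X := hX.2 c p hpX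
  have hqper : shiftZ P q = q := by
    rw [hq, shiftZ_shiftZ, add_comm, ← shiftZ_shiftZ, hPper]
  have hagree : ∀ s : ℤ, s.natAbs ≤ R → q (i + s) = (x : ℤ → A) (i + s) := by
    intro s hs
    have hs' : -(R:ℤ) ≤ s ∧ s ≤ R := by omega
    have h1 : q (i + s) = p (s + R) := by
      rw [hq, shiftZ_apply, show i + s - c = s + R by omega]
    set k : ℕ := (s + R).toNat with hk
    have hkcast : ((k:ℕ) : ℤ) = s + R := Int.toNat_of_nonneg (by omega)
    have hkL : k < 2 * R + 1 := by omega
    have h2 := hpwin k hkL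
    have h3 : shiftZ (-c) (x : ℤ → A) ((k:ℕ):ℤ) = (x : ℤ → A) (i + s) := by
      rw [shiftZ_apply, hkcast, show s + R - -c = i + s by omega]
    rw [h1, ← hkcast, h2, h3]
  -- f moves the periodic point q
  set qs : {x : ℤ → A // x ∈ X} := ⟨q, hqX⟩ with hqs
  have hqmoved : f.toEquiv qs ≠ qs := by
    intro h
    have heval : (f.toEquiv qs : ℤ → A) i = (f.toEquiv x : ℤ → A) i :=
      local_eval hX f hR qs x i hagree
    have hq0 : q i = (x : ℤ → A) i := by
      have := hagree 0 (by norm_num)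
      simpa using this
    have : (f.toEquiv qs : ℤ → A) i = q i := by rw [h]
    rw [heval, hq0] at this
    exact hi this
  -- the kernel of the action on P-periodic points
  haveI hfin : Finite {x : {x : ℤ → A // x ∈ X} // shiftZ P (x : ℤ → A) = (x : ℤ → A)} :=
    per_finite hP
  refine ⟨(permHom (X := X) P).ker, ?_, ?_⟩
  · constructor
    rw [Subgroup.index_ker]
    refine Nat.card_ne_zero.mpr ⟨⟨1, 1, map_one _⟩, ?_⟩
    infer_instance
  · intro hmem
    rw [MonoidHom.mem_ker] at hmem
    have := congrFun (congrArg (fun (e : Equiv.Perm _) => (e : _ → _)) hmem) ⟨qs, hqper⟩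
    simp only [Equiv.Perm.subtypePerm_apply, permHom] at this
    have h2 : f.toEquiv qs = qs := by
      have := Subtype.ext_iff.mp this
      exact this
    exact hqmoved h2

end Aut

end SIRF


/-- If `A` is a finite set and `X ⊆ A^ℤ` is a strongly irreducible subshift, then the
automorphism group `Aut(X)` of `X` is residually finite. -/
theorem aut_residually_finite_Z
    {A : Type*} [Finite A] [TopologicalSpace A] [DiscreteTopology A]
    (X : Set (ℤ → A)) (hX : IsSubshiftZ X) (hsi : IsStronglyIrreducibleZ X) :
    ResiduallyFinite (ShiftAutZ X) := by
  have hsi' : SIRF.IsStronglyIrreducibleZ' X := hsi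
  exact SIRF.main_aux hX hsi'
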